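/- Let f ∈ 𝕋[x] be a tangible polynomial of degree n ≥ 1 whose leading coefficient α_n lies in ℝ (is tangible). Then there exist a_1, …, a_n ∈ ℝ ∪ {-∞} such that f ∼ α_n ⊙ (x ⊕ a_1) ⊙ ⋯ ⊙ (x ⊕ a_n), i.e. f and this product of tangible linear factors take the same value at every point of 𝕋; moreover the multiset {a_1, …, a_n} is uniquely determined by f. -/

import Mathlib

/-- The extended tropical semiring `𝕋`: tangible reals `(a, false)`,
ghost reals `(a, true)`, and `none` = `-∞`. -/
def T : Type := Option (ℝ × Bool)

namespace T

/-- The tangible element of value `a`. -/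
def tang (a : ℝ) : T := some (a, false)

/-- The ghost element `a^ν` of value `a`. -/
def ghost (a : ℝ) : T := some (a, true)

/-- Tropical addition on `𝕋`. -/
noncomputable def add : T → T → T
  | none, y => y
  | some p, none => some p
  | some (a, s), some (b, t) =>
      if a < b then some (b, t) else if b < a then some (a, s) else some (a, true)

/-- Tropical multiplication on `𝕋`. -/
noncomputable def mul : T → T → T
  | none, _ => none
  | some _, none => none
  | some (a, s), some (b, t) => some (a + b, s || t)

lemma add_assoc' : ∀ x y z : T, add (add x y) z = add x (add y z) := by
  rintro (_ | ⟨a, s⟩) (_ | ⟨b, t⟩) (_ | ⟨c, u⟩) <;>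
    simp only [add, T] <;>
    (try split_ifs) <;>
    simp only [add, T] <;>
    (try split_ifs) <;>
    first
      | rfl
      | (exfalso; linarith)
      | (refine congrArg some ?_; refine Prod.ext ?_ ?_ <;>
          first | rfl | linarith | simp)

lemma add_comm' : ∀ x y : T, add x y = add y x := by
  rintro (_ | ⟨a, s⟩) (_ | ⟨b, t⟩) <;>
    simp only [add, T] <;>
    (try split_ifs) <;>
    first
      | rfl
      | (exfalso; linarith)
      | (refine congrArg some ?_; refine Prod.ext ?_ ?_ <;>
          first | rfl | linarith | simp)

lemma mul_assoc' : ∀ x y z : T, mul (mul x y) z = mul x (mul y z) := by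
  rintro (_ | ⟨a, s⟩) (_ | ⟨b, t⟩) (_ | ⟨c, u⟩) <;>
    simp [mul, T, add_assoc, Bool.or_assoc]

lemma mul_comm' : ∀ x y : T, mul x y = mul y x := by
  rintro (_ | ⟨a, s⟩) (_ | ⟨b, t⟩) <;> simp [mul, T, add_comm, Bool.or_comm]

lemma left_distrib' : ∀ x y z : T, mul x (add y z) = add (mul x y) (mul x z) := by
  rintro (_ | ⟨a, s⟩) (_ | ⟨b, t⟩) (_ | ⟨c, u⟩) <;>
    simp only [add, mul, T] <;>
    (try split_ifs) <;>
    simp only [add, mul, T] <;>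
    (try split_ifs) <;>
    first
      | rfl
      | (exfalso; linarith)
      | (refine congrArg some ?_; refine Prod.ext ?_ ?_ <;>
          first | rfl | linarith | simp)

noncomputable instance : Zero T := ⟨none⟩
noncomputable instance : One T := ⟨some (0, false)⟩
noncomputable instance : Add T := ⟨add⟩
noncomputable instance : Mul T := ⟨mul⟩

noncomputable instance : CommSemiring T where
  add := (· + ·)
  zero := 0
  add_assoc := add_assoc'
  zero_add := fun x => by cases x <;> rfl
  add_zero := fun x => by cases x <;> rfl
  add_comm := add_comm'
  mul := (· * ·)
  one := 1
  mul_assoc := mul_assoc'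
  one_mul := fun x => by
    show mul (some (0, false)) x = x
    rcases x with _ | ⟨a, s⟩ <;> simp [mul, T]
  mul_one := fun x => by
    show mul x (some (0, false)) = x
    rcases x with _ | ⟨a, s⟩ <;> simp [mul, T]
  mul_comm := mul_comm'
  zero_mul := fun x => by cases x <;> rfl
  mul_zero := fun x => by cases x <;> rfl
  left_distrib := left_distrib'
  right_distrib := fun x y z => by
    show mul (add x y) z = add (mul x z) (mul y z)
    rw [mul_comm', left_distrib', mul_comm' z x, mul_comm' z y]
  nsmul := nsmulRec

/-- Membership in the ghost part `𝕌̄ = 𝕌 ∪ {-∞}` of `𝕋`. -/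
def isGhost : T → Prop
  | none => True
  | some (_, s) => s = true

/-- Membership in the tangible part `ℝ ∪ {-∞}` of `𝕋`. -/
def isTangible : T → Prop
  | none => True
  | some (_, s) => s = false

/-- The underlying real value (junk value `0` at `-∞`); this is `π` on elements `≠ -∞`. -/
def val : T → ℝ
  | none => 0
  | some (a, _) => a

/-- The ghost map `ν`. -/
def nu : T → T
  | none => none
  | some (a, _) => some (a, true)

end T

namespace T

/-- The model value in the half line `[0,∞)`: `-∞ ↦ 0`, an element of value `a ↦ exp a`. -/
noncomputable def gval : T → ℝ
  | none => 0
  | some (a, _) => Real.exp a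

lemma nu_isGhost : ∀ x : T, isGhost (nu x)
  | none => trivial
  | some (_, _) => rfl

lemma gval_injOn_tang : Set.InjOn gval {x : T | isTangible x} := by
  rintro (_ | ⟨a, s⟩) hx (_ | ⟨b, t⟩) hy h <;>
    simp only [gval, Set.mem_setOf_eq, isTangible] at hx hy h
  · rfl
  · exact absurd h.symm (Real.exp_pos b).ne'
  · exact absurd h (Real.exp_pos a).ne'
  · rw [Real.exp_eq_exp] at h; subst hx; subst hy; subst h; rfl

lemma gval_injOn_ghost : Set.InjOn gval {x : T | isGhost x} := by
  rintro (_ | ⟨a, s⟩) hx (_ | ⟨b, t⟩) hy h <;>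
    simp only [gval, Set.mem_setOf_eq, isGhost] at hx hy h
  · rfl
  · exact absurd h.symm (Real.exp_pos b).ne'
  · exact absurd h (Real.exp_pos a).ne'
  · rw [Real.exp_eq_exp] at h; subst hx; subst hy; subst h; rfl

lemma gval_image_tang : gval '' {x : T | isTangible x} = Set.Ici 0 := by
  ext y
  constructor
  · rintro ⟨(_ | ⟨a, s⟩), hx, rfl⟩
    · exact Set.self_mem_Ici
    · exact le_of_lt (by simpa [gval] using Real.exp_pos a)
  · intro hy
    rcases eq_or_lt_of_le (Set.mem_Ici.mp hy) with h | h
    · exact ⟨none, trivial, h⟩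
    · exact ⟨some (Real.log y, false), rfl, by simp [gval, Real.exp_log h]⟩

lemma gval_image_ghost : gval '' {x : T | isGhost x} = Set.Ici 0 := by
  ext y
  constructor
  · rintro ⟨(_ | ⟨a, s⟩), hx, rfl⟩
    · exact Set.self_mem_Ici
    · exact le_of_lt (by simpa [gval] using Real.exp_pos a)
  · intro hy
    rcases eq_or_lt_of_le (Set.mem_Ici.mp hy) with h | h
    · exact ⟨none, trivial, h⟩
    · exact ⟨some (Real.log y, true), rfl, by simp [gval, Real.exp_log h]⟩

/-- The closed sets of the topology on `𝕋`: both the tangible and the ghost layers are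
closed in the model `[0,∞)` of `𝕌̄`, and the ghost image of the tangible layer is
contained in the set. -/
def TIsClosed (W : Set T) : Prop :=
  IsClosed (gval '' (W ∩ {x | isTangible x})) ∧
  IsClosed (gval '' (W ∩ {x | isGhost x})) ∧
  nu '' (W ∩ {x | isTangible x}) ⊆ W ∩ {x | isGhost x}

/-- The topology on `𝕋`. -/
noncomputable instance : TopologicalSpace T :=
  TopologicalSpace.ofClosed {W | TIsClosed W}
    (by
      refine ⟨?_, ?_, ?_⟩ <;> simp [TIsClosed])
    (fun A hA => by
      rcases A.eq_empty_or_nonempty with rfl | hne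
      · rw [Set.sInter_empty]
        refine ⟨?_, ?_, ?_⟩
        · rw [Set.univ_inter, gval_image_tang]; exact isClosed_Ici
        · rw [Set.univ_inter, gval_image_ghost]; exact isClosed_Ici
        · rintro y ⟨x, ⟨-, _⟩, rfl⟩
          exact ⟨trivial, nu_isGhost x⟩
      · have : Nonempty A := hne.to_subtype
        have h1 : (⋂₀ A) ∩ {x : T | isTangible x}
            = ⋂ (W : A), ((W : Set T) ∩ {x | isTangible x}) := by
          ext x
          simp only [Set.mem_inter_iff, Set.mem_sInter, Set.mem_iInter, Set.mem_setOf_eq]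
          constructor
          · rintro ⟨h, ht⟩ W; exact ⟨h W W.2, ht⟩
          · intro h
            obtain ⟨W, hW⟩ := hne
            exact ⟨fun V hV => (h ⟨V, hV⟩).1, (h ⟨W, hW⟩).2⟩
        have h2 : (⋂₀ A) ∩ {x : T | isGhost x}
            = ⋂ (W : A), ((W : Set T) ∩ {x | isGhost x}) := by
          ext x
          simp only [Set.mem_inter_iff, Set.mem_sInter, Set.mem_iInter, Set.mem_setOf_eq]
          constructor
          · rintro ⟨h, ht⟩ W; exact ⟨h W W.2, ht⟩
          · intro h
            obtain ⟨W, hW⟩ := hne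
            exact ⟨fun V hV => (h ⟨V, hV⟩).1, (h ⟨W, hW⟩).2⟩
        refine ⟨?_, ?_, ?_⟩
        · rw [h1, Set.InjOn.image_iInter_eq
            (gval_injOn_tang.mono (Set.iUnion_subset fun W => Set.inter_subset_right))]
          exact isClosed_iInter fun W => (hA W.2).1
        · rw [h2, Set.InjOn.image_iInter_eq
            (gval_injOn_ghost.mono (Set.iUnion_subset fun W => Set.inter_subset_right))]
          exact isClosed_iInter fun W => (hA W.2).2.1
        · rintro y ⟨x, ⟨hx, hxt⟩, rfl⟩
          refine ⟨fun W hW => ((hA hW).2.2 ⟨x, ⟨hx W hW, hxt⟩, rfl⟩).1, nu_isGhost x⟩)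
    (fun A hA B hB => by
      have h1 : (A ∪ B) ∩ {x : T | isTangible x}
          = (A ∩ {x | isTangible x}) ∪ (B ∩ {x | isTangible x}) :=
        Set.union_inter_distrib_right A B _
      have h2 : (A ∪ B) ∩ {x : T | isGhost x}
          = (A ∩ {x | isGhost x}) ∪ (B ∩ {x | isGhost x}) :=
        Set.union_inter_distrib_right A B _
      refine ⟨?_, ?_, ?_⟩
      · rw [h1, Set.image_union]; exact hA.1.union hB.1
      · rw [h2, Set.image_union]; exact hA.2.1.union hB.2.1
      · rintro y ⟨x, ⟨hx, hxt⟩, rfl⟩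
        rcases hx with hxA | hxB
        · have h := hA.2.2 ⟨x, ⟨hxA, hxt⟩, rfl⟩
          exact ⟨Or.inl h.1, h.2⟩
        · have h := hB.2.2 ⟨x, ⟨hxB, hxt⟩, rfl⟩
          exact ⟨Or.inr h.1, h.2⟩)

end T

namespace T

lemma zero_def : (0 : T) = none := rfl

/-- Constructor for finite elements of `T`. -/
def mk (a : ℝ) (s : Bool) : T := some (a, s)

lemma one_def : (1 : T) = mk 0 false := rfl

lemma mk_mul_mk (a b : ℝ) (s t : Bool) : mk a s * mk b t = mk (a + b) (s || t) := rfl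

lemma mk_ne_zero (a : ℝ) (s : Bool) : mk a s ≠ 0 := by
  intro h; exact Option.some_ne_none (a, s) h

lemma mk_inj {a b : ℝ} {s t : Bool} (h : mk a s = mk b t) : a = b ∧ s = t := by
  rcases Option.some_inj.1 h with h'
  exact ⟨congrArg Prod.fst h', congrArg Prod.snd h'⟩

/-- Case analysis for `T`. -/
lemma cases (x : T) : x = 0 ∨ ∃ a s, x = mk a s := by
  rcases x with _ | ⟨a, s⟩
  · exact Or.inl rfl
  · exact Or.inr ⟨a, s, rfl⟩

lemma mk_add_mk_of_lt {a v : ℝ} (h : a < v) (s u : Bool) : mk a s + mk v u = mk v u := by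
  show add _ _ = _
  simp only [mk, add, T, if_pos h]

lemma mk_add_mk_self (v : ℝ) (s u : Bool) : mk v s + mk v u = mk v true := by
  show add _ _ = _
  simp only [mk, add, T, lt_irrefl, if_false]

lemma zero_add' (x : T) : 0 + x = x := zero_add x

/-- `x` is strictly below value `v` (or is `-∞`). -/
def below (x : T) (v : ℝ) : Prop := ∀ a s, x = mk a s → a < v

/-- `x` is weakly below value `v` (or is `-∞`). -/
def beloweq (x : T) (v : ℝ) : Prop := ∀ a s, x = mk a s → a ≤ v

lemma below_zero (v : ℝ) : below 0 v := fun a s h => absurd h.symm (mk_ne_zero a s)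
lemma beloweq_zero (v : ℝ) : beloweq 0 v := fun a s h => absurd h.symm (mk_ne_zero a s)

lemma below_mk {a v : ℝ} (s : Bool) (h : a < v) : below (mk a s) v := by
  intro b t hb
  rcases mk_inj hb with ⟨rfl, rfl⟩
  exact h

lemma beloweq_mk {a v : ℝ} (s : Bool) (h : a ≤ v) : beloweq (mk a s) v := by
  intro b t hb
  rcases mk_inj hb with ⟨rfl, rfl⟩
  exact h

lemma below_beloweq {x : T} {v : ℝ} (h : below x v) : beloweq x v :=
  fun a s ha => (h a s ha).le

lemma add_of_below {x : T} {v : ℝ} {u : Bool} (h : below x v) :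
    x + mk v u = mk v u := by
  rcases cases x with rfl | ⟨a, s, rfl⟩
  · exact zero_add _
  · exact mk_add_mk_of_lt (h a s rfl) s u

lemma add_ghost_of_beloweq {x : T} {v : ℝ} (h : beloweq x v) :
    x + mk v true = mk v true := by
  rcases cases x with rfl | ⟨a, s, rfl⟩
  · exact zero_add _
  · rcases lt_or_eq_of_le (h a s rfl) with h' | h'
    · exact mk_add_mk_of_lt h' s true
    · subst h'; exact mk_add_mk_self a s true

lemma below_add {x y : T} {v : ℝ} (hx : below x v) (hy : below y v) :
    below (x + y) v := by
  rcases cases x with rfl | ⟨a, s, rfl⟩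
  · rwa [zero_add]
  · rcases cases y with rfl | ⟨b, t, rfl⟩
    · rwa [add_zero]
    · have ha := hx a s rfl
      have hb := hy b t rfl
      rcases lt_trichotomy a b with h | h | h
      · rw [mk_add_mk_of_lt h]; exact below_mk t hb
      · subst h; rw [mk_add_mk_self]; exact below_mk true ha
      · rw [add_comm, mk_add_mk_of_lt h]; exact below_mk s ha

lemma beloweq_add {x y : T} {v : ℝ} (hx : beloweq x v) (hy : beloweq y v) :
    beloweq (x + y) v := by
  rcases cases x with rfl | ⟨a, s, rfl⟩
  · rwa [zero_add]
  · rcases cases y with rfl | ⟨b, t, rfl⟩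
    · rwa [add_zero]
    · have ha := hx a s rfl
      have hb := hy b t rfl
      rcases lt_trichotomy a b with h | h | h
      · rw [mk_add_mk_of_lt h]; exact beloweq_mk t hb
      · subst h; rw [mk_add_mk_self]; exact beloweq_mk true ha
      · rw [add_comm, mk_add_mk_of_lt h]; exact beloweq_mk s ha

lemma sum_below {ι : Type*} (t : Finset ι) (g : ι → T) (v : ℝ)
    (h : ∀ i ∈ t, below (g i) v) : below (∑ i ∈ t, g i) v := by
  classical
  induction t using Finset.induction_on with
  | empty => simpa using below_zero v
  | @insert a s hni ih =>
    rw [Finset.sum_insert hni]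
    exact below_add (h a (Finset.mem_insert_self a s))
      (ih fun i hi => h i (Finset.mem_insert_of_mem hi))

lemma sum_beloweq {ι : Type*} (t : Finset ι) (g : ι → T) (v : ℝ)
    (h : ∀ i ∈ t, beloweq (g i) v) : beloweq (∑ i ∈ t, g i) v := by
  classical
  induction t using Finset.induction_on with
  | empty => simpa using beloweq_zero v
  | @insert a s hni ih =>
    rw [Finset.sum_insert hni]
    exact beloweq_add (h a (Finset.mem_insert_self a s))
      (ih fun i hi => h i (Finset.mem_insert_of_mem hi))

/-- A finite sum with a unique strictly dominating term. -/
lemma sum_eq_of_max {ι : Type*} [DecidableEq ι] (s : Finset ι) (g : ι → T) (i₀ : ι)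
    (hi : i₀ ∈ s) (v : ℝ) (u : Bool) (hval : g i₀ = mk v u)
    (h : ∀ i ∈ s, i ≠ i₀ → below (g i) v) :
    ∑ i ∈ s, g i = mk v u := by
  rw [← Finset.add_sum_erase s g hi, _root_.add_comm, hval]
  exact add_of_below (sum_below _ _ _ fun i hi' =>
    h i (Finset.mem_of_mem_erase hi') (Finset.ne_of_mem_erase hi'))

/-- A finite sum with a ghost term of maximal value is ghost. -/
lemma sum_ghost_single {ι : Type*} [DecidableEq ι] (s : Finset ι) (g : ι → T) (i₀ : ι)
    (hi : i₀ ∈ s) (v : ℝ) (hval : g i₀ = mk v true)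
    (h : ∀ i ∈ s, beloweq (g i) v) :
    ∑ i ∈ s, g i = mk v true := by
  rw [← Finset.add_sum_erase s g hi, _root_.add_comm, hval]
  exact add_ghost_of_beloweq (sum_beloweq _ _ _ fun i hi' =>
    h i (Finset.mem_of_mem_erase hi'))

/-- A finite sum with two distinct terms of maximal value is ghost. -/
lemma sum_ghost_pair {ι : Type*} [DecidableEq ι] (s : Finset ι) (g : ι → T) (i j : ι)
    (hi : i ∈ s) (hj : j ∈ s) (hij : i ≠ j) (v : ℝ) (ui uj : Bool)
    (hgi : g i = mk v ui) (hgj : g j = mk v uj)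
    (h : ∀ k ∈ s, beloweq (g k) v) :
    ∑ k ∈ s, g k = mk v true := by
  have hj' : j ∈ s.erase i := Finset.mem_erase.2 ⟨fun hh => hij hh.symm, hj⟩
  rw [← Finset.add_sum_erase s g hi, ← Finset.add_sum_erase _ g hj', ← _root_.add_assoc,
    hgi, hgj, mk_add_mk_self, _root_.add_comm]
  exact add_ghost_of_beloweq (sum_beloweq _ _ _ fun k hk =>
    h k (Finset.mem_of_mem_erase (Finset.mem_of_mem_erase hk)))

lemma pow_mk_pos (x : ℝ) (u : Bool) : ∀ p : ℕ, p ≠ 0 → (mk x u) ^ p = mk (p * x) u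
  | 0, h => absurd rfl h
  | 1, _ => by rw [pow_one]; norm_num [mk]; rfl
  | (p + 2), _ => by
    rw [pow_succ, pow_mk_pos x u (p + 1) (Nat.succ_ne_zero p), mk_mul_mk, Bool.or_self]
    push_cast
    ring_nf

lemma pow_tang (x : ℝ) (p : ℕ) : (mk x false) ^ p = mk (p * x) false := by
  rcases Nat.eq_zero_or_pos p with rfl | hp
  · rw [pow_zero, one_def]; norm_num
  · exact pow_mk_pos x false p hp.ne'

lemma prod_map_mk_tang {α : Type*} (R : Multiset α) (F : α → ℝ) (G : α → Bool)
    (h : ∀ b ∈ R, G b = false) :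
    (R.map fun b => mk (F b) (G b)).prod = mk ((R.map F).sum) false := by
  induction R using Multiset.induction_on with
  | empty => simp [one_def]
  | cons a s ih =>
    rw [Multiset.map_cons, Multiset.prod_cons, ih (fun b hb => h b (Multiset.mem_cons_of_mem hb)),
      mk_mul_mk, h a (Multiset.mem_cons_self a s)]
    simp

lemma prod_map_mk_ghost {α : Type*} (R : Multiset α) (F : α → ℝ) (G : α → Bool)
    (h : ∃ b ∈ R, G b = true) :
    (R.map fun b => mk (F b) (G b)).prod = mk ((R.map F).sum) true := by
  induction R using Multiset.induction_on with
  | empty => simp at h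
  | cons a s ih =>
    rw [Multiset.map_cons, Multiset.prod_cons]
    by_cases ha : ∃ b ∈ s, G b = true
    · rw [ih ha, mk_mul_mk, Bool.or_true]
      congr 1
      simp [add_comm]
    · obtain ⟨b, hb, hGb⟩ := h
      rcases Multiset.mem_cons.1 hb with rfl | hb'
      · have hall : ∀ c ∈ s, G c = false := by
          intro c hc
          rcases Bool.eq_false_or_eq_true (G c) with h' | h'
          · exact absurd ⟨c, hc, h'⟩ ha
          · exact h'
        rw [prod_map_mk_tang s F G hall, hGb, mk_mul_mk, Bool.true_or]
        congr 1
        simp [add_comm]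
      · exact absurd ⟨b, hb', hGb⟩ ha

end T
namespace T

/-- The data of a tropical factorization of the coefficient family `γ` on support `S`
with top index `n`: `p` roots `-∞` and finite roots `R`. -/
structure Good (S : Finset ℕ) (γ : ℕ → ℝ) (n : ℕ) (p : ℕ) (R : Multiset ℝ) : Prop where
  card : p + Multiset.card R = n
  le : ∀ x : ℝ, ∀ k ∈ S, γ k + (k : ℝ) * x ≤
      γ n + (p : ℝ) * x + (R.map fun b => max x b).sum
  attain : ∀ x : ℝ, ∃ k ∈ S, γ k + (k : ℝ) * x =
      γ n + (p : ℝ) * x + (R.map fun b => max x b).sum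
  mem_iff : ∀ x : ℝ, x ∈ R ↔ ∃ i ∈ S, ∃ j ∈ S, i ≠ j ∧
      γ i + (i : ℝ) * x = γ n + (p : ℝ) * x + (R.map fun b => max x b).sum ∧
      γ j + (j : ℝ) * x = γ n + (p : ℝ) * x + (R.map fun b => max x b).sum
  zeroMax : ∀ x : ℝ, ((p = 0 ∧ ∀ b ∈ R, x < b) ↔
      (0 ∈ S ∧ ∀ k ∈ S, k ≠ 0 → γ k + (k : ℝ) * x < γ 0))
  zeroMem : 0 ∈ S ↔ p = 0
  const : p = 0 → γ 0 = γ n + R.sum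
  slope : ∀ b ∈ R, ∃ k ∈ S, k < n ∧ γ n + ((n : ℝ) - (k : ℝ)) * b ≤ γ k

set_option maxHeartbeats 2000000 in
lemma core (n : ℕ) : ∀ (S : Finset ℕ) (γ : ℕ → ℝ), n ∈ S → (∀ k ∈ S, k ≤ n) →
    ∃ p R, Good S γ n p R := by
  induction n using Nat.strong_induction_on with
  | _ n ih =>
  intro S γ hn hle
  classical
  by_cases hbase : ∀ k ∈ S, k = n
  · -- base case : S = {n}
    refine ⟨n, 0, ?_⟩
    constructor
    · simp
    · intro x k hk
      rcases hbase k hk with rfl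
      simp
    · intro x
      exact ⟨n, hn, by simp⟩
    · intro x
      simp only [Multiset.notMem_zero, false_iff]
      rintro ⟨i, hi, j, hj, hij, -⟩
      exact hij ((hbase i hi).trans (hbase j hj).symm)
    · intro x
      constructor
      · rintro ⟨rfl, -⟩
        refine ⟨hn, fun k hk hk0 => absurd (hbase k hk) hk0⟩
      · rintro ⟨h0, -⟩
        exact ⟨(hbase 0 h0).symm, by simp⟩
    · constructor
      · intro h0; exact (hbase 0 h0).symm
      · rintro rfl; exact hn
    · intro hn0
      subst hn0
      simp
    · simp
  · -- inductive step
    push_neg at hbase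
    obtain ⟨k₁, hk₁S, hk₁n⟩ := hbase
    have hk₁lt : k₁ < n := lt_of_le_of_ne (hle k₁ hk₁S) hk₁n
    obtain ⟨K, hK⟩ : ∃ K, K = S.filter (fun k => k < n) := ⟨_, rfl⟩
    have hKne : K.Nonempty := by
      refine ⟨k₁, ?_⟩
      rw [hK]
      exact Finset.mem_filter.2 ⟨hk₁S, hk₁lt⟩
    obtain ⟨σ, hσ⟩ : ∃ σ : ℕ → ℝ, σ = fun k => (γ k - γ n) / ((n : ℝ) - (k : ℝ)) := ⟨_, rfl⟩
    obtain ⟨ρ, hρ⟩ : ∃ ρ, ρ = (K.image σ).max' (hKne.image σ) := ⟨_, rfl⟩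
    have hρmem : ρ ∈ K.image σ := by rw [hρ]; exact (K.image σ).max'_mem _
    obtain ⟨k0, hk0K, hk0σ⟩ := Finset.mem_image.1 hρmem
    rw [hK, Finset.mem_filter] at hk0K
    have hk0S : k0 ∈ S := hk0K.1
    have hk0lt : k0 < n := hk0K.2
    have hk0r : (k0 : ℝ) < (n : ℝ) := by exact_mod_cast hk0lt
    have hρge : ∀ k ∈ S, k < n → σ k ≤ ρ := by
      intro k hk hkn
      rw [hρ]
      refine Finset.le_max' _ _ (Finset.mem_image_of_mem σ ?_)
      rw [hK]
      exact Finset.mem_filter.2 ⟨hk, hkn⟩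
    have fact1 : γ k0 = γ n + ((n : ℝ) - (k0 : ℝ)) * ρ := by
      have h := hk0σ
      simp only [hσ] at h
      rw [div_eq_iff (by linarith : (n : ℝ) - (k0 : ℝ) ≠ 0)] at h
      linarith
    have fact2 : ∀ k ∈ S, γ k ≤ γ n + ((n : ℝ) - (k : ℝ)) * ρ := by
      intro k hk
      rcases eq_or_lt_of_le (hle k hk) with rfl | hklt
      · simp
      · have h := hρge k hk hklt
        have hkr : (k : ℝ) < (n : ℝ) := by exact_mod_cast hklt
        rw [hσ] at h
        simp only [] at h
        rw [div_le_iff₀ (by linarith)] at h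
        linarith
    have hcomb : ∀ k ∈ S, γ k ≤ γ k0 + ((k0 : ℝ) - (k : ℝ)) * ρ := by
      intro k hk
      have h := fact2 k hk
      nlinarith [fact1]
    -- the subproblem
    obtain ⟨S', hS'⟩ : ∃ S', S' = S.filter (fun k => k ≤ k0) := ⟨_, rfl⟩
    have hmemS' : ∀ k, k ∈ S' ↔ (k ∈ S ∧ k ≤ k0) := by
      intro k; rw [hS', Finset.mem_filter]
    have hk0S' : k0 ∈ S' := (hmemS' k0).2 ⟨hk0S, le_refl k0⟩
    have hS'le : ∀ k ∈ S', k ≤ k0 := fun k hk => ((hmemS' k).1 hk).2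
    have hS'S : ∀ k ∈ S', k ∈ S := fun k hk => ((hmemS' k).1 hk).1
    obtain ⟨p', R', g'⟩ := ih k0 hk0lt S' γ hk0S' hS'le
    have hR'le : ∀ b ∈ R', b ≤ ρ := by
      intro b hb
      obtain ⟨k, hkS', hklt, hineq⟩ := g'.slope b hb
      have hkS : k ∈ S := hS'S k hkS'
      have h2 := hcomb k hkS
      have hpos : (0 : ℝ) < (k0 : ℝ) - (k : ℝ) := by
        have : (k : ℝ) < (k0 : ℝ) := by exact_mod_cast hklt
        linarith
      nlinarith
    refine ⟨p', Multiset.replicate (n - k0) ρ + R', ?_⟩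
    have hcast : ((n - k0 : ℕ) : ℝ) = (n : ℝ) - (k0 : ℝ) := by
      rw [Nat.cast_sub hk0lt.le]
    have hRmap : ∀ F : ℝ → ℝ,
        (((Multiset.replicate (n - k0) ρ + R').map F)).sum
          = ((n : ℝ) - (k0 : ℝ)) * F ρ + (R'.map F).sum := by
      intro F
      rw [Multiset.map_add, Multiset.sum_add, Multiset.map_replicate,
        Multiset.sum_replicate, nsmul_eq_mul, hcast]
    -- key values
    have hGsub_le : ∀ x : ℝ, γ k0 + (k0 : ℝ) * x ≤
        γ k0 + (p' : ℝ) * x + (R'.map fun b => max x b).sum :=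
      fun x => g'.le x k0 hk0S'
    have hc : (p' : ℝ) + (Multiset.card R' : ℝ) = (k0 : ℝ) := by
      exact_mod_cast congrArg (Nat.cast (R := ℝ)) g'.card
    have hGsub_top : ∀ x : ℝ, ρ ≤ x →
        γ k0 + (p' : ℝ) * x + (R'.map fun b => max x b).sum = γ k0 + (k0 : ℝ) * x := by
      intro x hx
      have hmc : (R'.map fun b => max x b) = R'.map (fun _ => x) :=
        Multiset.map_congr rfl (fun b hb => max_eq_left ((hR'le b hb).trans hx))
      rw [hmc, Multiset.map_const', Multiset.sum_replicate, nsmul_eq_mul, ← hc]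
      ring
    have hGfull : ∀ x : ℝ,
        γ n + (p' : ℝ) * x + (((Multiset.replicate (n - k0) ρ + R').map fun b => max x b)).sum
          = γ k0 + (p' : ℝ) * x + (R'.map fun b => max x b).sum
            + ((n : ℝ) - (k0 : ℝ)) * (max x ρ - ρ) := by
      intro x
      rw [hRmap]
      nlinarith [fact1]
    have hGeq : ∀ x : ℝ, x ≤ ρ →
        γ n + (p' : ℝ) * x + (((Multiset.replicate (n - k0) ρ + R').map fun b => max x b)).sum
          = γ k0 + (p' : ℝ) * x + (R'.map fun b => max x b).sum := by
      intro x hx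
      rw [hGfull x, max_eq_right hx]
      ring
    have hGtop : ∀ x : ℝ, ρ ≤ x →
        γ n + (p' : ℝ) * x + (((Multiset.replicate (n - k0) ρ + R').map fun b => max x b)).sum
          = γ n + (n : ℝ) * x := by
      intro x hx
      rw [hGfull x, hGsub_top x hx, max_eq_left hx]
      nlinarith [fact1]
    -- strict upper bounds for indices above k0 when x < ρ
    have hstrict_hi : ∀ x : ℝ, x < ρ → ∀ k ∈ S, k0 < k →
        γ k + (k : ℝ) * x < γ k0 + (k0 : ℝ) * x := by
      intro x hx k hk hkk
      have h1 := hcomb k hk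
      have hkr : (k0 : ℝ) < (k : ℝ) := by exact_mod_cast hkk
      nlinarith [mul_pos (sub_pos.2 hkr) (sub_pos.2 hx)]
    -- strict upper bounds for indices below n when ρ < x
    have hstrict_lo : ∀ x : ℝ, ρ < x → ∀ k ∈ S, k < n →
        γ k + (k : ℝ) * x < γ n + (n : ℝ) * x := by
      intro x hx k hk hkn
      have h1 := fact2 k hk
      have hkr : (k : ℝ) < (n : ℝ) := by exact_mod_cast hkn
      nlinarith [mul_pos (sub_pos.2 hkr) (sub_pos.2 hx)]
    constructor
    · -- card
      have := g'.card
      rw [Multiset.card_add, Multiset.card_replicate]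
      omega
    · -- le
      intro x k hk
      rcases le_or_gt x ρ with hx | hx
      · rw [hGeq x hx]
        rcases le_or_gt k k0 with hkk | hkk
        · exact g'.le x k ((hmemS' k).2 ⟨hk, hkk⟩)
        · have h1 := hcomb k hk
          have h2 := hGsub_le x
          have hkr : (k0 : ℝ) < (k : ℝ) := by exact_mod_cast hkk
          nlinarith [mul_nonneg (sub_nonneg.2 hkr.le) (sub_nonneg.2 hx)]
      · rw [hGtop x hx.le]
        have h1 := fact2 k hk
        have hkr : (k : ℝ) ≤ (n : ℝ) := by exact_mod_cast hle k hk
        nlinarith [mul_nonneg (by linarith : (0:ℝ) ≤ (n : ℝ) - (k : ℝ))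
          (by linarith : (0:ℝ) ≤ x - ρ)]
    · -- attain
      intro x
      rcases le_or_gt x ρ with hx | hx
      · obtain ⟨k, hk, hkeq⟩ := g'.attain x
        exact ⟨k, hS'S k hk, by rw [hGeq x hx]; exact hkeq⟩
      · exact ⟨n, hn, by rw [hGtop x hx.le]⟩
    · -- mem_iff
      intro x
      constructor
      · intro hx
        rcases Multiset.mem_add.1 hx with hx | hx
        · have hxρ : x = ρ := Multiset.eq_of_mem_replicate hx
          subst hxρ
          refine ⟨k0, hk0S, n, hn, hk0lt.ne, ?_, ?_⟩
          · rw [hGeq x le_rfl, hGsub_top x le_rfl]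
          · rw [hGeq x le_rfl, hGsub_top x le_rfl]
            linarith [fact1]
        · have hxρ : x ≤ ρ := hR'le x hx
          obtain ⟨i, hi, j, hj, hij, hvi, hvj⟩ := (g'.mem_iff x).1 hx
          exact ⟨i, hS'S i hi, j, hS'S j hj, hij,
            by rw [hGeq x hxρ]; exact hvi, by rw [hGeq x hxρ]; exact hvj⟩
      · rintro ⟨i, hi, j, hj, hij, hvi, hvj⟩
        rcases lt_trichotomy x ρ with hx | hx | hx
        · -- both attaining indices must be ≤ k0
          have key : ∀ k ∈ S, γ k + (k : ℝ) * x =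
              γ n + (p' : ℝ) * x +
                (((Multiset.replicate (n - k0) ρ + R').map fun b => max x b)).sum → k ≤ k0 := by
            intro k hk hkeq
            by_contra hkk
            push_neg at hkk
            have h1 := hstrict_hi x hx k hk hkk
            have h2 := hGsub_le x
            rw [hGeq x hx.le] at hkeq
            linarith
          have hi' : i ∈ S' := (hmemS' i).2 ⟨hi, key i hi hvi⟩
          have hj' : j ∈ S' := (hmemS' j).2 ⟨hj, key j hj hvj⟩
          rw [hGeq x hx.le] at hvi hvj
          exact Multiset.mem_add.2 (Or.inr ((g'.mem_iff x).2 ⟨i, hi', j, hj', hij, hvi, hvj⟩))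
        · subst hx
          refine Multiset.mem_add.2 (Or.inl ?_)
          rw [Multiset.mem_replicate]
          exact ⟨by omega, rfl⟩
        · exfalso
          have key : ∀ k ∈ S, γ k + (k : ℝ) * x =
              γ n + (p' : ℝ) * x +
                (((Multiset.replicate (n - k0) ρ + R').map fun b => max x b)).sum → k = n := by
            intro k hk hkeq
            by_contra hkn
            have h1 := hstrict_lo x hx k hk (lt_of_le_of_ne (hle k hk) hkn)
            rw [hGtop x hx.le] at hkeq
            linarith
          exact hij ((key i hi hvi).trans (key j hj hvj).symm)
    · -- zeroMax
      intro x
      have hrep : (∀ b ∈ Multiset.replicate (n - k0) ρ + R', x < b) ↔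
          (x < ρ ∧ ∀ b ∈ R', x < b) := by
        constructor
        · intro h
          refine ⟨h ρ (Multiset.mem_add.2 (Or.inl ?_)),
            fun b hb => h b (Multiset.mem_add.2 (Or.inr hb))⟩
          rw [Multiset.mem_replicate]; exact ⟨by omega, rfl⟩
        · rintro ⟨h1, h2⟩ b hb
          rcases Multiset.mem_add.1 hb with hb | hb
          · rw [Multiset.eq_of_mem_replicate hb]; exact h1
          · exact h2 b hb
      rw [hrep]
      have hsub := g'.zeroMax x
      constructor
      · rintro ⟨hp0, hxρ, hR'⟩
        obtain ⟨h0S', hsubstrict⟩ := hsub.1 ⟨hp0, hR'⟩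
        refine ⟨hS'S 0 h0S', fun k hk hk0 => ?_⟩
        rcases le_or_gt k k0 with hkk | hkk
        · exact hsubstrict k ((hmemS' k).2 ⟨hk, hkk⟩) hk0
        · have h1 := hstrict_hi x hxρ k hk hkk
          rcases Nat.eq_zero_or_pos k0 with rfl | hk0pos
          · simpa using h1
          · have h2 := hsubstrict k0 hk0S' hk0pos.ne'
            linarith
      · rintro ⟨h0S, hstrict⟩
        have h0S' : 0 ∈ S' := (hmemS' 0).2 ⟨h0S, Nat.zero_le k0⟩
        have hsubstrict : ∀ k ∈ S', k ≠ 0 → γ k + (k : ℝ) * x < γ 0 :=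
          fun k hk hk0 => hstrict k (hS'S k hk) hk0
        obtain ⟨hp0, hR'⟩ := hsub.2 ⟨h0S', hsubstrict⟩
        refine ⟨hp0, ?_, hR'⟩
        by_contra hxρ
        push_neg at hxρ
        have h1 := hstrict n hn (by omega)
        have hA := g'.le x 0 h0S'
        have hB := hGsub_top x hxρ
        have hprod := mul_nonneg (sub_nonneg.2 hk0r.le) (sub_nonneg.2 hxρ)
        push_cast at hA
        nlinarith [fact1]
    · -- zeroMem
      rw [← g'.zeroMem]
      constructor
      · intro h0; exact (hmemS' 0).2 ⟨h0, Nat.zero_le k0⟩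
      · intro h0; exact hS'S 0 h0
    · -- const
      intro hp0
      have h1 := g'.const hp0
      rw [Multiset.sum_add, Multiset.sum_replicate, nsmul_eq_mul, hcast]
      linarith [fact1]
    · -- slope
      intro b hb
      rcases Multiset.mem_add.1 hb with hb | hb
      · rw [Multiset.eq_of_mem_replicate hb]
        exact ⟨k0, hk0S, hk0lt, by linarith [fact1]⟩
      · obtain ⟨k, hkS', hklt, hineq⟩ := g'.slope b hb
        refine ⟨k, hS'S k hkS', hklt.trans hk0lt, ?_⟩
        have hbρ := hR'le b hb
        have hkr : (k : ℝ) < (k0 : ℝ) := by exact_mod_cast hklt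
        have hprod := mul_nonneg (sub_nonneg.2 hk0r.le) (sub_nonneg.2 hbρ)
        nlinarith [fact1]

end T
namespace T

noncomputable instance : DecidableEq T :=
  inferInstanceAs (DecidableEq (Option (ℝ × Bool)))

/-- The value of `mk x u + r` for tangible `r`. -/
def mxval (x : ℝ) : T → ℝ
  | none => x
  | some (b, _) => max x b

lemma mxval_zero (x : ℝ) : mxval x 0 = x := rfl
lemma mxval_mk (x b : ℝ) (s : Bool) : mxval x (mk b s) = max x b := rfl

lemma isTangible_cases {r : T} (h : isTangible r) : r = 0 ∨ ∃ b, r = mk b false := by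
  rcases r with _ | ⟨b, s⟩
  · exact Or.inl rfl
  · have hs : s = false := h
    subst hs
    exact Or.inr ⟨b, rfl⟩

lemma add_tang_eq (x : ℝ) (r : T) (h : isTangible r) :
    mk x false + r = mk (mxval x r) (if r = mk x false then true else false) := by
  rcases isTangible_cases h with rfl | ⟨b, rfl⟩
  · rw [add_zero, mxval_zero, if_neg (fun hh => mk_ne_zero x false hh.symm)]
  · rw [mxval_mk]
    rcases lt_trichotomy x b with hxb | rfl | hxb
    · rw [mk_add_mk_of_lt hxb, if_neg (fun hh => absurd (mk_inj hh).1 hxb.ne'),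
        max_eq_right hxb.le]
    · rw [mk_add_mk_self, if_pos rfl, max_self]
    · rw [_root_.add_comm, mk_add_mk_of_lt hxb,
        if_neg (fun hh => absurd (mk_inj hh).1 hxb.ne), max_eq_left hxb.le]

lemma add_ghost_eq (x : ℝ) (r : T) (h : isTangible r) :
    mk x true + r = mk (mxval x r) (if mxval x r ≤ x then true else false) := by
  rcases isTangible_cases h with rfl | ⟨b, rfl⟩
  · rw [add_zero, mxval_zero, if_pos le_rfl]
  · rw [mxval_mk]
    rcases lt_trichotomy x b with hxb | rfl | hxb
    · rw [mk_add_mk_of_lt hxb, max_eq_right hxb.le, if_neg (by simpa using hxb)]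
    · rw [mk_add_mk_self, max_self, if_pos le_rfl]
    · rw [_root_.add_comm, mk_add_mk_of_lt hxb, max_eq_left hxb.le, if_pos le_rfl]

lemma prod_add_tang_of_not_mem (x : ℝ) (s : Multiset T) (hs : ∀ r ∈ s, isTangible r)
    (hx : mk x false ∉ s) :
    (s.map fun r => mk x false + r).prod = mk ((s.map (mxval x)).sum) false := by
  classical
  have h1 : (s.map fun r => mk x false + r)
      = s.map (fun r => mk (mxval x r) (if r = mk x false then true else false)) :=
    Multiset.map_congr rfl (fun r hr => add_tang_eq x r (hs r hr))
  rw [h1, prod_map_mk_tang s (mxval x) _ (fun r hr => if_neg (fun hh : r = mk x false => hx (hh ▸ hr)))]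

lemma prod_add_tang_of_mem (x : ℝ) (s : Multiset T) (hs : ∀ r ∈ s, isTangible r)
    (hx : mk x false ∈ s) :
    (s.map fun r => mk x false + r).prod = mk ((s.map (mxval x)).sum) true := by
  classical
  have h1 : (s.map fun r => mk x false + r)
      = s.map (fun r => mk (mxval x r) (if r = mk x false then true else false)) :=
    Multiset.map_congr rfl (fun r hr => add_tang_eq x r (hs r hr))
  rw [h1, prod_map_mk_ghost s (mxval x) _ ⟨mk x false, hx, if_pos rfl⟩]

lemma prod_add_ghost_high (x : ℝ) (s : Multiset T) (hs : ∀ r ∈ s, isTangible r)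
    (hx : ∀ r ∈ s, ¬ mxval x r ≤ x) :
    (s.map fun r => mk x true + r).prod = mk ((s.map (mxval x)).sum) false := by
  classical
  have h1 : (s.map fun r => mk x true + r)
      = s.map (fun r => mk (mxval x r) (if mxval x r ≤ x then true else false)) :=
    Multiset.map_congr rfl (fun r hr => add_ghost_eq x r (hs r hr))
  rw [h1, prod_map_mk_tang s (mxval x) _ (fun r hr => if_neg (hx r hr))]

lemma prod_add_ghost_low (x : ℝ) (s : Multiset T) (hs : ∀ r ∈ s, isTangible r)
    (hx : ∃ r ∈ s, mxval x r ≤ x) :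
    (s.map fun r => mk x true + r).prod = mk ((s.map (mxval x)).sum) true := by
  classical
  obtain ⟨r0, hr0, hr0x⟩ := hx
  have h1 : (s.map fun r => mk x true + r)
      = s.map (fun r => mk (mxval x r) (if mxval x r ≤ x then true else false)) :=
    Multiset.map_congr rfl (fun r hr => add_ghost_eq x r (hs r hr))
  rw [h1, prod_map_mk_ghost s (mxval x) _ ⟨r0, hr0, if_pos hr0x⟩]

lemma prod_tangible_nonzero (s : Multiset T) (hs : ∀ r ∈ s, isTangible r)
    (h0 : (0 : T) ∉ s) : s.prod = mk ((s.map val).sum) false := by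
  induction s using Multiset.induction_on with
  | empty => simp [one_def]
  | cons a t ih =>
    have ha := hs a (Multiset.mem_cons_self a t)
    rcases isTangible_cases ha with rfl | ⟨b, rfl⟩
    · exact absurd (Multiset.mem_cons_self _ t) h0
    · rw [Multiset.prod_cons,
        ih (fun r hr => hs r (Multiset.mem_cons_of_mem hr))
          (fun hh => h0 (Multiset.mem_cons_of_mem hh)),
        mk_mul_mk, Multiset.map_cons, Multiset.sum_cons]
      rfl

/-- Evaluation of a product of linear factors. -/
lemma eval_linear_prod (c : T) (s : Multiset T) (a : T) :
    (Polynomial.C c * (s.map fun r => Polynomial.X + Polynomial.C r).prod).eval a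
      = c * (s.map fun r => a + r).prod := by
  rw [Polynomial.eval_mul, Polynomial.eval_C, Polynomial.eval_multiset_prod, Multiset.map_map]
  congr 2
  apply Multiset.map_congr rfl
  intro r _
  simp

end T
namespace T

/-- The finite value of an element of `T`, if any. -/
def fin : T → Option ℝ
  | none => none
  | some (b, _) => some b

lemma fin_zero : fin 0 = none := rfl
lemma fin_mk (b : ℝ) (s : Bool) : fin (mk b s) = some b := rfl

set_option maxHeartbeats 2000000 in
lemma unique_aux (n : ℕ) : ∀ s s' : Multiset T, Multiset.card s = n → Multiset.card s' = n →
    (∀ r ∈ s, isTangible r) → (∀ r ∈ s', isTangible r) →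
    (∀ x : ℝ, (s.map fun r => mk x false + r).prod = (s'.map fun r => mk x false + r).prod) →
    s = s' := by
  induction n using Nat.strong_induction_on with
  | _ n ih =>
  intro s s' hc hc' hs hs' hprod
  classical
  have key : ∀ x : ℝ, (s.map (mxval x)).sum = (s'.map (mxval x)).sum ∧
      (mk x false ∈ s ↔ mk x false ∈ s') := by
    intro x
    have hp := hprod x
    by_cases h1 : mk x false ∈ s <;> by_cases h2 : mk x false ∈ s'
    · rw [prod_add_tang_of_mem x s hs h1, prod_add_tang_of_mem x s' hs' h2] at hp
      exact ⟨(mk_inj hp).1, by tauto⟩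
    · rw [prod_add_tang_of_mem x s hs h1, prod_add_tang_of_not_mem x s' hs' h2] at hp
      exact absurd (mk_inj hp).2 (by simp)
    · rw [prod_add_tang_of_not_mem x s hs h1, prod_add_tang_of_mem x s' hs' h2] at hp
      exact absurd (mk_inj hp).2 (by simp)
    · rw [prod_add_tang_of_not_mem x s hs h1, prod_add_tang_of_not_mem x s' hs' h2] at hp
      exact ⟨(mk_inj hp).1, by tauto⟩
  obtain ⟨V, hV⟩ : ∃ V, V = (s + s').filterMap fin := ⟨_, rfl⟩
  have hVmem : ∀ c : ℝ, c ∈ V ↔ ∃ r ∈ s + s', fin r = some c := by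
    intro c; rw [hV, Multiset.mem_filterMap]
  by_cases hV0 : V = 0
  · -- no finite entries at all
    have hzs : ∀ w : Multiset T, (∀ r ∈ w, isTangible r) → (w ≤ s + s') →
        ∀ r ∈ w, r = (0 : T) := by
      intro w hw hle r hr
      rcases isTangible_cases (hw r hr) with rfl | ⟨b, rfl⟩
      · rfl
      · exfalso
        have : b ∈ V := (hVmem b).2 ⟨mk b false, Multiset.mem_of_le hle hr, fin_mk b false⟩
        rw [hV0] at this
        exact Multiset.notMem_zero b this
    have h1 : s = Multiset.replicate n (0 : T) := by
      rw [← hc]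
      exact Multiset.eq_replicate_card.2 (hzs s hs (Multiset.le_add_right s s'))
    have h2 : s' = Multiset.replicate n (0 : T) := by
      rw [← hc']
      exact Multiset.eq_replicate_card.2 (hzs s' hs' (Multiset.le_add_left s' s))
    rw [h1, h2]
  · -- there is a largest finite value b
    have hFne : V.toFinset.Nonempty := by
      obtain ⟨c, hc0⟩ := Multiset.exists_mem_of_ne_zero hV0
      exact ⟨c, Multiset.mem_toFinset.2 hc0⟩
    obtain ⟨b, hb⟩ : ∃ b, b = V.toFinset.max' hFne := ⟨_, rfl⟩
    have hbV : b ∈ V := by rw [hb]; exact Multiset.mem_toFinset.1 (V.toFinset.max'_mem hFne)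
    have hbmax : ∀ c ∈ V, c ≤ b := by
      intro c hc0
      rw [hb]
      exact V.toFinset.le_max' c (Multiset.mem_toFinset.2 hc0)
    have hbs1 : mk b false ∈ s := by
      obtain ⟨r, hr, hfr⟩ := (hVmem b).1 hbV
      have hrt : isTangible r := by
        rcases Multiset.mem_add.1 hr with h | h
        · exact hs r h
        · exact hs' r h
      rcases isTangible_cases hrt with rfl | ⟨c, rfl⟩
      · exact absurd hfr (by rw [fin_zero]; simp)
      · have hcb : c = b := by
          rw [fin_mk] at hfr
          exact Option.some_inj.1 hfr
        subst hcb
        rcases Multiset.mem_add.1 hr with h | h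
        · exact h
        · exact ((key c).2).2 h
    have hbs2 : mk b false ∈ s' := ((key b).2).1 hbs1
    -- a threshold below b
    obtain ⟨d, hd⟩ : ∃ d, d = ((b - 1) ::ₘ V.filter (fun c => c < b)).toFinset.max'
        ⟨b - 1, Multiset.mem_toFinset.2 (Multiset.mem_cons_self _ _)⟩ := ⟨_, rfl⟩
    have hdb : d < b := by
      rw [hd]
      apply (Finset.max'_lt_iff _ _).2
      intro c hc0
      rcases Multiset.mem_cons.1 (Multiset.mem_toFinset.1 hc0) with rfl | hc1
      · linarith
      · exact (Multiset.mem_filter.1 hc1).2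
    have hdW : ∀ c ∈ V, c < b → c ≤ d := by
      intro c hc0 hcb
      rw [hd]
      refine Finset.le_max' _ c (Multiset.mem_toFinset.2 (Multiset.mem_cons_of_mem ?_))
      rw [Multiset.mem_filter]
      exact ⟨hc0, hcb⟩
    -- split off the copies of mk b false
    obtain ⟨t, ht⟩ : ∃ t, t = s.filter (fun r => ¬ r = mk b false) := ⟨_, rfl⟩
    obtain ⟨t', ht'⟩ : ∃ t', t' = s'.filter (fun r => ¬ r = mk b false) := ⟨_, rfl⟩
    obtain ⟨m, hm⟩ : ∃ m, m = s.count (mk b false) := ⟨_, rfl⟩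
    obtain ⟨m', hm'⟩ : ∃ m', m' = s'.count (mk b false) := ⟨_, rfl⟩
    have hsplit : s = Multiset.replicate m (mk b false) + t := by
      rw [ht, hm]
      conv_lhs => rw [← Multiset.filter_add_not (fun r => r = mk b false) s]
      congr 1
      rw [Multiset.filter_eq']
    have hsplit' : s' = Multiset.replicate m' (mk b false) + t' := by
      rw [ht', hm']
      conv_lhs => rw [← Multiset.filter_add_not (fun r => r = mk b false) s']
      congr 1
      rw [Multiset.filter_eq']
    have hnt : mk b false ∉ t := by rw [ht]; intro h; exact (Multiset.mem_filter.1 h).2 rfl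
    have hnt' : mk b false ∉ t' := by rw [ht']; intro h; exact (Multiset.mem_filter.1 h).2 rfl
    have hts : ∀ r ∈ t, isTangible r := by
      intro r hr; rw [ht] at hr; exact hs r (Multiset.mem_filter.1 hr).1
    have hts' : ∀ r ∈ t', isTangible r := by
      intro r hr; rw [ht'] at hr; exact hs' r (Multiset.mem_filter.1 hr).1
    have hmemt : ∀ x : ℝ, mk x false ∈ t ↔ (mk x false ∈ s ∧ x ≠ b) := by
      intro x
      rw [ht, Multiset.mem_filter]
      constructor
      · rintro ⟨h1, h2⟩
        exact ⟨h1, fun hh => h2 (by rw [hh])⟩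
      · rintro ⟨h1, h2⟩
        exact ⟨h1, fun hh => h2 (mk_inj hh).1⟩
    have hmemt' : ∀ x : ℝ, mk x false ∈ t' ↔ (mk x false ∈ s' ∧ x ≠ b) := by
      intro x
      rw [ht', Multiset.mem_filter]
      constructor
      · rintro ⟨h1, h2⟩
        exact ⟨h1, fun hh => h2 (by rw [hh])⟩
      · rintro ⟨h1, h2⟩
        exact ⟨h1, fun hh => h2 (mk_inj hh).1⟩
    -- sum formula in the gap (d, b)
    have hsum : ∀ (w mw tw), (∀ c : ℝ, mk c false ∈ tw → (c ∈ V ∧ c ≠ b)) →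
        (∀ r ∈ tw, isTangible r) →
        w = Multiset.replicate mw (mk b false) + tw →
        ∀ x : ℝ, d < x → x < b →
        (w.map (mxval x)).sum = (mw : ℝ) * b + (Multiset.card tw : ℝ) * x := by
      intro w mw tw hwV hwt hweq x hdx hxb
      subst hweq
      rw [Multiset.map_add, Multiset.sum_add, Multiset.map_replicate, Multiset.sum_replicate,
        nsmul_eq_mul, mxval_mk, max_eq_right hxb.le]
      congr 1
      have hcongr : tw.map (mxval x) = tw.map (fun _ => x) := by
        apply Multiset.map_congr rfl
        intro r hr
        rcases isTangible_cases (hwt r hr) with rfl | ⟨c, rfl⟩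
        · exact mxval_zero x
        · obtain ⟨hcV, hcb⟩ := hwV c hr
          have : c ≤ d := hdW c hcV (lt_of_le_of_ne (hbmax c hcV) hcb)
          rw [mxval_mk]
          exact max_eq_left (by linarith)
      rw [hcongr, Multiset.map_const', Multiset.sum_replicate, nsmul_eq_mul]
    have hsumS : ∀ x : ℝ, d < x → x < b →
        (s.map (mxval x)).sum = (m : ℝ) * b + (Multiset.card t : ℝ) * x := by
      intro x h1 h2
      refine hsum s m t (fun c hct => ?_) hts hsplit x h1 h2
      have hcs : mk c false ∈ s := by rw [ht] at hct; exact (Multiset.mem_filter.1 hct).1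
      refine ⟨(hVmem c).2 ⟨mk c false, Multiset.mem_add.2 (Or.inl hcs), fin_mk c false⟩, ?_⟩
      exact ((hmemt c).1 hct).2
    have hsumS' : ∀ x : ℝ, d < x → x < b →
        (s'.map (mxval x)).sum = (m' : ℝ) * b + (Multiset.card t' : ℝ) * x := by
      intro x h1 h2
      refine hsum s' m' t' (fun c hct => ?_) hts' hsplit' x h1 h2
      have hcs : mk c false ∈ s' := by rw [ht'] at hct; exact (Multiset.mem_filter.1 hct).1
      refine ⟨(hVmem c).2 ⟨mk c false, Multiset.mem_add.2 (Or.inr hcs), fin_mk c false⟩, ?_⟩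
      exact ((hmemt' c).1 hct).2
    -- two sample points give m = m'
    have hcardt : m + Multiset.card t = n := by
      rw [← hc, hsplit, Multiset.card_add, Multiset.card_replicate]
    have hcardt' : m' + Multiset.card t' = n := by
      rw [← hc', hsplit', Multiset.card_add, Multiset.card_replicate]
    have hmm : m = m' := by
      obtain ⟨x₁, hx₁⟩ : ∃ y : ℝ, y = (d + b) / 2 := ⟨_, rfl⟩
      obtain ⟨x₂, hx₂⟩ : ∃ y : ℝ, y = (d + 3 * b) / 4 := ⟨_, rfl⟩
      have h₁d : d < x₁ := by rw [hx₁]; linarith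
      have h₁b : x₁ < b := by rw [hx₁]; linarith
      have h₂d : d < x₂ := by rw [hx₂]; linarith
      have h₂b : x₂ < b := by rw [hx₂]; linarith
      have h12 : x₁ ≠ x₂ := by rw [hx₁, hx₂]; intro hh; linarith [hdb]
      have e1 := (key x₁).1
      rw [hsumS x₁ h₁d h₁b, hsumS' x₁ h₁d h₁b] at e1
      have e2 := (key x₂).1
      rw [hsumS x₂ h₂d h₂b, hsumS' x₂ h₂d h₂b] at e2
      have h3 : (Multiset.card t : ℝ) * (x₁ - x₂) = (Multiset.card t' : ℝ) * (x₁ - x₂) := by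
        ring_nf
        ring_nf at e1 e2
        linarith
      have h4 : (Multiset.card t : ℝ) = (Multiset.card t' : ℝ) :=
        mul_right_cancel₀ (sub_ne_zero.2 h12) h3
      have h5 : Multiset.card t = Multiset.card t' := by exact_mod_cast h4
      omega
    -- products of the reduced multisets agree
    have hm1 : 1 ≤ m := by
      rw [hm]
      exact Multiset.one_le_count_iff_mem.2 hbs1
    have hprodt : ∀ x : ℝ,
        (t.map fun r => mk x false + r).prod = (t'.map fun r => mk x false + r).prod := by
      intro x
      have hsum_t : (t.map (mxval x)).sum = (t'.map (mxval x)).sum := by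
        have h0 := (key x).1
        rw [hsplit, hsplit', hmm] at h0
        rw [Multiset.map_add, Multiset.map_add, Multiset.sum_add, Multiset.sum_add] at h0
        exact by linarith [h0]
      have hmem : mk x false ∈ t ↔ mk x false ∈ t' := by
        rw [hmemt x, hmemt' x, (key x).2]
      by_cases hx : mk x false ∈ t
      · rw [prod_add_tang_of_mem x t hts hx, prod_add_tang_of_mem x t' hts' (hmem.1 hx), hsum_t]
      · rw [prod_add_tang_of_not_mem x t hts hx,
          prod_add_tang_of_not_mem x t' hts' (fun hh => hx (hmem.2 hh)), hsum_t]
    have hrec := ih (n - m) (by omega) t t' (by omega) (by omega) hts hts' hprodt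
    rw [hsplit, hsplit', hrec, hmm]

end T
namespace T

lemma mk_congr {a b : ℝ} {s t : Bool} (h1 : a = b) (h2 : s = t) : mk a s = mk b t := by
  rw [h1, h2]

lemma mk_mul_cancel {a : ℝ} {x y : T} (h : mk a false * x = mk a false * y) : x = y := by
  rcases cases x with rfl | ⟨b, s, rfl⟩ <;> rcases cases y with rfl | ⟨c, t, rfl⟩
  · rfl
  · rw [mul_zero, mk_mul_mk] at h
    exact absurd h.symm (mk_ne_zero _ _)
  · rw [mul_zero, mk_mul_mk] at h
    exact absurd h (mk_ne_zero _ _)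
  · rw [mk_mul_mk, mk_mul_mk] at h
    obtain ⟨h1, h2⟩ := mk_inj h
    rw [Bool.false_or, Bool.false_or] at h2
    have hbc : b = c := by linarith
    rw [hbc, h2]

end T

/-- unique factorization of tangible polynomials with tangible-real
leading coefficient into tangible linear factors, up to equivalence. -/
theorem tropical_tangible_factorization (f : Polynomial T)
    (htan : ∀ k : ℕ, T.isTangible (f.coeff k))
    (hdeg : 1 ≤ f.natDegree)
    (hlead : ∃ c : ℝ, f.leadingCoeff = T.tang c) :
    ∃! s : Multiset T,
      Multiset.card s = f.natDegree ∧ (∀ x ∈ s, T.isTangible x) ∧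
      ∀ a : T, f.eval a =
        (Polynomial.C f.leadingCoeff *
          (s.map fun r => Polynomial.X + Polynomial.C r).prod).eval a := by
  classical
  open T in
  obtain ⟨c, hc⟩ := hlead
  have hlc0 : f.leadingCoeff ≠ 0 := by rw [hc]; exact mk_ne_zero c false
  have hfne : f ≠ 0 := Polynomial.leadingCoeff_ne_zero.1 hlc0
  obtain ⟨γ, hγ⟩ : ∃ γ : ℕ → ℝ, γ = fun k => val (f.coeff k) := ⟨_, rfl⟩
  have hcoeff : ∀ k ∈ f.support, f.coeff k = mk (γ k) false := by
    intro k hk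
    have h2 : f.coeff k ≠ 0 := Polynomial.mem_support_iff.1 hk
    rcases isTangible_cases (htan k) with h | ⟨b, hb⟩
    · exact absurd h h2
    · rw [hγ]
      simp only []
      rw [hb]
      rfl
  have hnS : f.natDegree ∈ f.support := Polynomial.natDegree_mem_support_of_nonzero hfne
  have hleS : ∀ k ∈ f.support, k ≤ f.natDegree := fun k hk =>
    Polynomial.le_natDegree_of_mem_supp k hk
  have hlead' : f.leadingCoeff = mk (γ f.natDegree) false := hcoeff _ hnS
  obtain ⟨p, R, g⟩ := core f.natDegree f.support γ hnS hleS
  obtain ⟨s₀, hs₀⟩ : ∃ s₀ : Multiset T,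
      s₀ = Multiset.replicate p (0 : T) + R.map (fun b => mk b false) := ⟨_, rfl⟩
  have hcard₀ : Multiset.card s₀ = f.natDegree := by
    rw [hs₀, Multiset.card_add, Multiset.card_replicate, Multiset.card_map]
    exact g.card
  have htang₀ : ∀ r ∈ s₀, isTangible r := by
    intro r hr
    rw [hs₀] at hr
    rcases Multiset.mem_add.1 hr with h | h
    · rw [Multiset.eq_of_mem_replicate h]; trivial
    · obtain ⟨b, -, rfl⟩ := Multiset.mem_map.1 h
      rfl
  have hmem₀ : ∀ x : ℝ, mk x false ∈ s₀ ↔ x ∈ R := by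
    intro x
    rw [hs₀, Multiset.mem_add]
    constructor
    · rintro (h | h)
      · exact absurd (Multiset.eq_of_mem_replicate h) (mk_ne_zero x false)
      · obtain ⟨b, hb, hbx⟩ := Multiset.mem_map.1 h
        rwa [← (mk_inj hbx).1]
    · intro h
      exact Or.inr (Multiset.mem_map.2 ⟨x, h, rfl⟩)
  have hmx : ∀ x : ℝ, (s₀.map (mxval x)).sum = (p : ℝ) * x + (R.map fun b => max x b).sum := by
    intro x
    rw [hs₀, Multiset.map_add, Multiset.sum_add, Multiset.map_replicate, Multiset.sum_replicate,
      mxval_zero, nsmul_eq_mul, Multiset.map_map]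
    congr 1
  have heval : ∀ a : T, f.eval a = ∑ k ∈ f.support, f.coeff k * a ^ k := by
    intro a
    rw [Polynomial.eval_eq_sum, Polynomial.sum_def]
  -- the key pointwise identity
  have hkey : ∀ a : T, f.eval a = mk (γ f.natDegree) false * (s₀.map fun r => a + r).prod := by
    intro a
    rcases a with _ | ⟨x, u⟩
    · -- a = -∞
      show f.eval 0 = mk (γ f.natDegree) false * ((s₀.map fun r => (0 : T) + r)).prod
      have hmap0 : (s₀.map fun r => (0 : T) + r) = s₀ := by
        rw [Multiset.map_congr rfl (fun r _ => zero_add r), Multiset.map_id']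
      have h0 : f.eval (0 : T) = f.coeff 0 := (Polynomial.coeff_zero_eq_eval_zero f).symm
      rw [h0, hmap0]
      by_cases hp : p = 0
      · have h0S : 0 ∈ f.support := g.zeroMem.2 hp
        rw [hcoeff 0 h0S, hs₀, hp]
        rw [Multiset.replicate_zero, zero_add]
        have : (R.map fun b => mk b false).prod = mk ((R.map (fun b => b)).sum) false :=
          prod_map_mk_tang R (fun b => b) (fun _ => false) (fun _ _ => rfl)
        rw [this, Multiset.map_id', mk_mul_mk, Bool.or_self]
        rw [g.const hp]
      · have h0S : 0 ∉ f.support := fun h => hp (g.zeroMem.1 h)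
        rw [Polynomial.notMem_support_iff.1 h0S]
        have h0mem : (0 : T) ∈ s₀ := by
          rw [hs₀]
          exact Multiset.mem_add.2 (Or.inl (Multiset.mem_replicate.2 ⟨hp, rfl⟩))
        rw [Multiset.prod_eq_zero h0mem, mul_zero]
    · -- a = mk x u
      show f.eval (mk x u) = mk (γ f.natDegree) false * ((s₀.map fun r => mk x u + r)).prod
      have hterm : ∀ k ∈ f.support,
          f.coeff k * (mk x u) ^ k = mk (γ k + (k : ℝ) * x) (if k = 0 then false else u) := by
        intro k hk
        rcases Nat.eq_zero_or_pos k with rfl | hkpos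
        · rw [pow_zero, mul_one, hcoeff 0 hk, if_pos rfl]
          exact mk_congr (by norm_num) rfl
        · rw [pow_mk_pos x u k hkpos.ne', hcoeff k hk, mk_mul_mk, Bool.false_or,
            if_neg hkpos.ne']
      have hbelow : ∀ k ∈ f.support, beloweq (f.coeff k * (mk x u) ^ k)
          (γ f.natDegree + (p : ℝ) * x + (R.map fun b => max x b).sum) := by
        intro k hk
        rw [hterm k hk]
        exact beloweq_mk _ (g.le x k hk)
      have hMval : γ f.natDegree + (s₀.map (mxval x)).sum
          = γ f.natDegree + (p : ℝ) * x + (R.map fun b => max x b).sum := by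
        rw [hmx x]; ring
      rcases u with _ | _
      · -- tangible point
        by_cases hxR : x ∈ R
        · obtain ⟨i, hi, j, hj, hij, hvi, hvj⟩ := (g.mem_iff x).1 hxR
          rw [heval, sum_ghost_pair f.support _ i j hi hj hij
            (γ f.natDegree + (p : ℝ) * x + (R.map fun b => max x b).sum) _ _
            (by rw [hterm i hi, hvi]) (by rw [hterm j hj, hvj]) hbelow]
          rw [prod_add_tang_of_mem x s₀ htang₀ ((hmem₀ x).2 hxR), mk_mul_mk, Bool.false_or,
            hMval]
        · obtain ⟨k, hk, hkeq⟩ := g.attain x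
          have hstrict : ∀ k' ∈ f.support, k' ≠ k →
              below (f.coeff k' * (mk x false) ^ k')
                (γ f.natDegree + (p : ℝ) * x + (R.map fun b => max x b).sum) := by
            intro k' hk' hkk
            rw [hterm k' hk']
            refine below_mk _ (lt_of_le_of_ne (g.le x k' hk') (fun heq => ?_))
            exact hxR ((g.mem_iff x).2 ⟨k', hk', k, hk, hkk, heq, hkeq⟩)
          rw [heval, sum_eq_of_max f.support _ k hk _ _ (by rw [hterm k hk, hkeq]) hstrict]
          rw [prod_add_tang_of_not_mem x s₀ htang₀ (fun hh => hxR ((hmem₀ x).1 hh)),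
            mk_mul_mk, Bool.false_or, hMval, ite_self]
      · -- ghost point
        by_cases hA : 0 ∈ f.support ∧ ∀ k ∈ f.support, k ≠ 0 → γ k + (k : ℝ) * x < γ 0
        · obtain ⟨h0S, hstrict⟩ := hA
          obtain ⟨hp0, hxb⟩ := (g.zeroMax x).2 ⟨h0S, hstrict⟩
          have hM0 : γ f.natDegree + (p : ℝ) * x + (R.map fun b => max x b).sum = γ 0 := by
            obtain ⟨k, hk, hkeq⟩ := g.attain x
            by_cases hk0 : k = 0
            · subst hk0
              rw [← hkeq]
              norm_num
            · have h1 := hstrict k hk hk0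
              have h2 := g.le x 0 h0S
              push_cast at h2
              linarith
          have hbelow0 : ∀ k ∈ f.support, k ≠ 0 →
              below (f.coeff k * (mk x true) ^ k) (γ 0) := by
            intro k hk hk0
            rw [hterm k hk]
            exact below_mk _ (hstrict k hk hk0)
          rw [heval, sum_eq_of_max f.support _ 0 h0S (γ 0) false
            (by rw [hterm 0 h0S, if_pos rfl]; exact mk_congr (by norm_num) rfl) hbelow0]
          have hhigh : ∀ r ∈ s₀, ¬ mxval x r ≤ x := by
            intro r hr
            rw [hs₀, hp0, Multiset.replicate_zero, zero_add] at hr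
            obtain ⟨b, hb, rfl⟩ := Multiset.mem_map.1 hr
            rw [mxval_mk]
            have := hxb b hb
            simp only [not_le]
            exact lt_max_of_lt_right this
          rw [prod_add_ghost_high x s₀ htang₀ hhigh, mk_mul_mk, Bool.or_self, hMval, hM0]
        · -- the value is ghost
          have hlow : ∃ r ∈ s₀, mxval x r ≤ x := by
            have hnot : ¬ (p = 0 ∧ ∀ b ∈ R, x < b) := fun h => hA ((g.zeroMax x).1 h)
            by_cases hp : p = 0
            · push_neg at hnot
              obtain ⟨b, hb, hbx⟩ := hnot hp
              refine ⟨mk b false, (hmem₀ b).2 hb, ?_⟩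
              rw [mxval_mk]
              exact max_le le_rfl hbx
            · refine ⟨0, ?_, le_of_eq (mxval_zero x)⟩
              rw [hs₀]
              exact Multiset.mem_add.2 (Or.inl (Multiset.mem_replicate.2 ⟨hp, rfl⟩))
          have hRHS : mk (γ f.natDegree) false * ((s₀.map fun r => mk x true + r)).prod
              = mk (γ f.natDegree + (p : ℝ) * x + (R.map fun b => max x b).sum) true := by
            rw [prod_add_ghost_low x s₀ htang₀ hlow, mk_mul_mk, Bool.or_true, hMval]
          rw [hRHS]
          obtain ⟨k, hk, hkeq⟩ := g.attain x
          by_cases hk0 : k = 0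
          · subst hk0
            have h0S : 0 ∈ f.support := hk
            push_neg at hA
            obtain ⟨k', hk', hk'0, hge⟩ := hA h0S
            have hle' := g.le x k' hk'
            have heq' : γ k' + (k' : ℝ) * x
                = γ f.natDegree + (p : ℝ) * x + (R.map fun b => max x b).sum := by
              push_cast at hkeq
              linarith
            rw [heval]
            exact sum_ghost_pair f.support _ 0 k' h0S hk' (fun hh => hk'0 hh.symm) _ _ _
              (by rw [hterm 0 h0S, if_pos rfl, hkeq])
              (by rw [hterm k' hk', heq']) hbelow
          · rw [heval]
            exact sum_ghost_single f.support _ k hk _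
              (by rw [hterm k hk, if_neg hk0, hkeq]) hbelow
  -- assemble existence and uniqueness
  refine ⟨s₀, ⟨hcard₀, htang₀, fun a => ?_⟩, ?_⟩
  · rw [eval_linear_prod, hlead', hkey a]
  · rintro s ⟨hcards, htangs, hevals⟩
    refine unique_aux f.natDegree s s₀ hcards hcard₀ htangs htang₀ (fun x => ?_)
    have h1 := hevals (mk x false)
    rw [eval_linear_prod, hlead'] at h1
    have h2 := hkey (mk x false)
    exact mk_mul_cancel (h1.symm.trans h2)
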